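/- Assume the Mammen–Tsybakov margin assumption: 𝔼[(1{f_θ(X) ≠ Y} - 1{f_θ̄(X) ≠ Y})²] ≤ C (R(θ) - R̄) for all θ, where R̄ = R(θ̄) is the minimal risk. Then for any λ with 0 < λ < 2n, 𝔼 exp{λ[R(θ) - R̄] - λ[r_n(θ) - r̄_n]} ≤ exp( (Cλ²/(2n - λ)) (R(θ) - R̄) ), i.e. the Bernstein assumption holds with g(λ,n) = Cλ²/(2n - λ). -/

import Mathlib

open MeasureTheory ProbabilityTheory

lemma sinh_le_mul_cosh' {x : ℝ} (hx : 0 ≤ x) : Real.sinh x ≤ x * Real.cosh x := by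
  have hmono : MonotoneOn (fun u : ℝ => u * Real.cosh u - Real.sinh u) (Set.Ici 0) := by
    apply monotoneOn_of_deriv_nonneg (convex_Ici 0)
    · exact ((continuous_id.mul Real.continuous_cosh).sub Real.continuous_sinh).continuousOn
    · intro y hy
      exact (((hasDerivAt_id y).mul (Real.hasDerivAt_cosh y)).sub
        (Real.hasDerivAt_sinh y)).differentiableAt.differentiableWithinAt
    · intro y hy
      rw [interior_Ici] at hy
      have hd : HasDerivAt (fun u : ℝ => u * Real.cosh u - Real.sinh u)
          (1 * Real.cosh y + y * Real.sinh y - Real.cosh y) y :=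
        ((hasDerivAt_id y).mul (Real.hasDerivAt_cosh y)).sub (Real.hasDerivAt_sinh y)
      rw [hd.deriv]
      have h1 : 0 ≤ y * Real.sinh y :=
        mul_nonneg hy.le (Real.sinh_nonneg_iff.mpr hy.le)
      linarith
  have h := hmono Set.self_mem_Ici hx hx
  simp only [Real.sinh_zero, Real.cosh_zero, mul_one, zero_mul, sub_zero] at h
  linarith

lemma cosh_sub_one_le' {t : ℝ} (ht : 0 < t) (ht2 : t < 2) :
    Real.cosh t - 1 ≤ t ^ 2 / (2 - t) := by
  have h2t : 0 < 2 - t := by linarith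
  rw [le_div_iff₀ h2t]
  have hhalf : Real.sinh (t/2) ≤ (t/2) * Real.cosh (t/2) := sinh_le_mul_cosh' (by linarith)
  have hs : 0 ≤ Real.sinh (t/2) := Real.sinh_nonneg_iff.mpr (by linarith)
  have hcosh : Real.cosh t = 2 * Real.cosh (t/2) ^ 2 - 1 := by
    conv_lhs => rw [show t = 2*(t/2) by ring, Real.cosh_two_mul]
    linarith [Real.cosh_sq (t/2)]
  have hsq : Real.cosh (t/2) ^ 2 = Real.sinh (t/2) ^ 2 + 1 := Real.cosh_sq _
  have h1 : Real.sinh (t/2) ^ 2 ≤ (t/2) ^ 2 * Real.cosh (t/2) ^ 2 := by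
    have := pow_le_pow_left₀ hs hhalf 2
    calc Real.sinh (t/2) ^ 2 ≤ ((t/2) * Real.cosh (t/2)) ^ 2 := this
      _ = (t/2)^2 * Real.cosh (t/2)^2 := by ring
  have hc1 : 1 ≤ Real.cosh t := Real.one_le_cosh t
  have hA : Real.cosh t - 1 ≤ t^2/4 * (Real.cosh t + 1) := by nlinarith [h1, hcosh, hsq]
  nlinarith [hA, mul_nonneg (mul_nonneg ht.le ht.le) h2t.le, sq_nonneg t,
    mul_pos ht h2t, mul_nonneg (sub_nonneg.mpr hc1) ht.le,
    mul_le_mul_of_nonneg_right hA h2t.le]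

/-- Bernstein assumption for i.i.d. 0-1 classification loss under the
Mammen–Tsybakov margin assumption, with `g(λ,n) = Cλ²/(2n-λ)`:
`𝔼 exp{λ[R(θ)-R̄] - λ[r_n(θ)-r̄_n]} ≤ exp((Cλ²/(2n-λ))(R(θ)-R̄))`. -/
theorem bernstein_classification {Ω 𝒳 : Type*} [MeasurableSpace Ω] [MeasurableSpace 𝒳]
    (P : Measure Ω) [IsProbabilityMeasure P]
    (n : ℕ) (hn : 0 < n)
    (X : Fin n → Ω → 𝒳) (Y : Fin n → Ω → Bool)
    (hX : ∀ i, Measurable (X i)) (hY : ∀ i, Measurable (Y i))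
    (hindep : iIndepFun (fun i ω => (X i ω, Y i ω)) P)
    (hident : ∀ i, IdentDistrib (fun ω => (X i ω, Y i ω))
      (fun ω => (X ⟨0, hn⟩ ω, Y ⟨0, hn⟩ ω)) P P)
    (f fbar : 𝒳 → Bool) (hf : Measurable f) (hfbar : Measurable fbar)
    -- `fbar` is the Bayes optimal classifier in the class: `R̄ ≤ R(θ)`
    (hmin : (P {ω | fbar (X ⟨0, hn⟩ ω) ≠ Y ⟨0, hn⟩ ω}).toReal
      ≤ (P {ω | f (X ⟨0, hn⟩ ω) ≠ Y ⟨0, hn⟩ ω}).toReal)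
    (C : ℝ) (hC : 0 < C)
    -- Mammen–Tsybakov margin assumption
    (hmargin : ∫ ω, ((if f (X ⟨0, hn⟩ ω) ≠ Y ⟨0, hn⟩ ω then (1:ℝ) else 0)
          - (if fbar (X ⟨0, hn⟩ ω) ≠ Y ⟨0, hn⟩ ω then (1:ℝ) else 0)) ^ 2 ∂P
        ≤ C * ((P {ω | f (X ⟨0, hn⟩ ω) ≠ Y ⟨0, hn⟩ ω}).toReal
          - (P {ω | fbar (X ⟨0, hn⟩ ω) ≠ Y ⟨0, hn⟩ ω}).toReal))
    (lam : ℝ) (hlam : 0 < lam) (hlam2 : lam < 2 * n) :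
    ∫ ω, Real.exp (lam * ((P {ω' | f (X ⟨0, hn⟩ ω') ≠ Y ⟨0, hn⟩ ω'}).toReal
          - (P {ω' | fbar (X ⟨0, hn⟩ ω') ≠ Y ⟨0, hn⟩ ω'}).toReal)
        - lam * ((1 / n) * ∑ i, (if f (X i ω) ≠ Y i ω then (1:ℝ) else 0)
          - (1 / n) * ∑ i, (if fbar (X i ω) ≠ Y i ω then (1:ℝ) else 0))) ∂P
      ≤ Real.exp ((C * lam ^ 2 / (2 * n - lam))
          * ((P {ω' | f (X ⟨0, hn⟩ ω') ≠ Y ⟨0, hn⟩ ω'}).toReal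
            - (P {ω' | fbar (X ⟨0, hn⟩ ω') ≠ Y ⟨0, hn⟩ ω'}).toReal)) := by
  classical
  set i0 : Fin n := ⟨0, hn⟩ with hi0
  set m : ℝ := (P {ω | f (X i0 ω) ≠ Y i0 ω}).toReal
    - (P {ω | fbar (X i0 ω) ≠ Y i0 ω}).toReal with hmdef
  set t : ℝ := lam / n with htdef
  have hnR : (0:ℝ) < n := by exact_mod_cast hn
  have hnne : (n:ℝ) ≠ 0 := ne_of_gt hnR
  have ht0 : 0 < t := div_pos hlam hnR
  have ht2 : t < 2 := by rw [htdef, div_lt_iff₀ hnR]; linarith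
  have h2t : 0 < 2 - t := by linarith
  have h2nl : (0:ℝ) < 2 * n - lam := by linarith
  have hm0 : 0 ≤ m := sub_nonneg.mpr hmin
  -- measurable pieces
  have hU : MeasurableSet {p : 𝒳 × Bool | f p.1 ≠ p.2} := by
    have hpre : {p : 𝒳 × Bool | f p.1 ≠ p.2}
        = (fun p : 𝒳 × Bool => (f p.1, p.2)) ⁻¹' {q : Bool × Bool | q.1 ≠ q.2} := rfl
    rw [hpre]
    exact ((hf.comp measurable_fst).prodMk measurable_snd) (Set.toFinite _).measurableSet
  have hV : MeasurableSet {p : 𝒳 × Bool | fbar p.1 ≠ p.2} := by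
    have hpre : {p : 𝒳 × Bool | fbar p.1 ≠ p.2}
        = (fun p : 𝒳 × Bool => (fbar p.1, p.2)) ⁻¹' {q : Bool × Bool | q.1 ≠ q.2} := rfl
    rw [hpre]
    exact ((hfbar.comp measurable_fst).prodMk measurable_snd) (Set.toFinite _).measurableSet
  set φ : 𝒳 × Bool → ℝ := fun p =>
    t * m - t * ((if f p.1 ≠ p.2 then (1:ℝ) else 0)
      - (if fbar p.1 ≠ p.2 then (1:ℝ) else 0)) with hφdef
  have hφ : Measurable φ := by
    apply Measurable.sub measurable_const
    apply Measurable.const_mul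
    exact ((measurable_const.ite hU measurable_const).sub
      (measurable_const.ite hV measurable_const))
  set W : Fin n → Ω → ℝ := fun i ω => φ (X i ω, Y i ω) with hWdef
  have hWmeas : ∀ i, Measurable (W i) := fun i => hφ.comp ((hX i).prodMk (hY i))
  have hWindep : iIndepFun W P :=
    hindep.comp (fun _ => φ) (fun _ => hφ)
  -- rewrite the integrand as sum of W i
  have hrw : ∀ ω, (lam * m
        - lam * ((1 / (n:ℝ)) * ∑ i, (if f (X i ω) ≠ Y i ω then (1:ℝ) else 0)
          - (1 / (n:ℝ)) * ∑ i, (if fbar (X i ω) ≠ Y i ω then (1:ℝ) else 0)))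
      = 1 * (∑ i, W i) ω := by
    intro ω
    simp only [Finset.sum_apply, hWdef, hφdef, one_mul]
    rw [Finset.sum_sub_distrib, Finset.sum_const, Finset.card_univ, Fintype.card_fin,
      ← Finset.mul_sum, Finset.sum_sub_distrib]
    rw [htdef]
    field_simp
    rw [nsmul_eq_mul]
    have hcancel : (n:ℝ) * (lam * m / n) = lam * m := by field_simp
    rw [hcancel]; ring
  -- single-sample facts
  have hAmeas : MeasurableSet {ω | f (X i0 ω) ≠ Y i0 ω} :=
    ((hX i0).prodMk (hY i0)) hU
  have hBmeas : MeasurableSet {ω | fbar (X i0 ω) ≠ Y i0 ω} :=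
    ((hX i0).prodMk (hY i0)) hV
  set a : Ω → ℝ := fun ω => if f (X i0 ω) ≠ Y i0 ω then (1:ℝ) else 0 with hadef
  set b : Ω → ℝ := fun ω => if fbar (X i0 ω) ≠ Y i0 ω then (1:ℝ) else 0 with hbdef
  have haind : a = Set.indicator {ω | f (X i0 ω) ≠ Y i0 ω} (fun _ => (1:ℝ)) := by
    funext ω; simp [hadef, Set.indicator_apply, Set.mem_setOf_eq]
  have hbind : b = Set.indicator {ω | fbar (X i0 ω) ≠ Y i0 ω} (fun _ => (1:ℝ)) := by
    funext ω; simp [hbdef, Set.indicator_apply, Set.mem_setOf_eq]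
  have inta : Integrable a P := by
    rw [haind]; exact (integrable_const 1).indicator hAmeas
  have intb : Integrable b P := by
    rw [hbind]; exact (integrable_const 1).indicator hBmeas
  have hint_a : ∫ ω, a ω ∂P = (P {ω | f (X i0 ω) ≠ Y i0 ω}).toReal := by
    rw [haind]; exact integral_indicator_one hAmeas
  have hint_b : ∫ ω, b ω ∂P = (P {ω | fbar (X i0 ω) ≠ Y i0 ω}).toReal := by
    rw [hbind]; exact integral_indicator_one hBmeas
  have hZint : Integrable (fun ω => a ω - b ω) P := inta.sub intb
  have hZavg : ∫ ω, (a ω - b ω) ∂P = m := by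
    rw [integral_sub inta intb, hint_a, hint_b]
  -- Z squared
  set c2 : Ω → ℝ := fun ω =>
    if ω ∈ ({ω | f (X i0 ω) ≠ Y i0 ω} ∩ {ω | fbar (X i0 ω) ≠ Y i0 ω}) then (1:ℝ) else 0
    with hc2def
  have intc2 : Integrable c2 P := by
    have : c2 = Set.indicator ({ω | f (X i0 ω) ≠ Y i0 ω} ∩ {ω | fbar (X i0 ω) ≠ Y i0 ω})
        (fun _ => (1:ℝ)) := by
      funext ω; simp [hc2def, Set.indicator_apply]
    rw [this]; exact (integrable_const 1).indicator (hAmeas.inter hBmeas)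
  have hZsq : (fun ω => (a ω - b ω) ^ 2) = fun ω => a ω + b ω - 2 * c2 ω := by
    funext ω
    have ha' : a ω = if f (X i0 ω) ≠ Y i0 ω then (1:ℝ) else 0 := rfl
    have hb' : b ω = if fbar (X i0 ω) ≠ Y i0 ω then (1:ℝ) else 0 := rfl
    have hc' : c2 ω = if (f (X i0 ω) ≠ Y i0 ω ∧ fbar (X i0 ω) ≠ Y i0 ω) then (1:ℝ) else 0 := by
      simp [hc2def, Set.mem_inter_iff, Set.mem_setOf_eq]
    rw [ha', hb', hc']
    by_cases h1 : f (X i0 ω) = Y i0 ω <;> by_cases h2 : fbar (X i0 ω) = Y i0 ω <;>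
      simp [h1, h2] <;> norm_num
  have intZ2 : Integrable (fun ω => (a ω - b ω) ^ 2) P := by
    rw [hZsq]; exact (inta.add intb).sub (intc2.const_mul 2)
  set s : ℝ := ∫ ω, (a ω - b ω) ^ 2 ∂P with hsdef
  have hs0 : 0 ≤ s := integral_nonneg fun ω => sq_nonneg _
  have hsC : s ≤ C * m := hmargin
  -- pointwise exponential identity
  have hpt : ∀ ω, Real.exp (1 * W i0 ω)
      = Real.exp (t * m) * (1 - Real.sinh t * (a ω - b ω)
        + (Real.cosh t - 1) * (a ω - b ω) ^ 2) := by
    intro ω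
    rw [one_mul]
    show Real.exp (t * m - t * (a ω - b ω)) = _
    have ha' : a ω = if f (X i0 ω) ≠ Y i0 ω then (1:ℝ) else 0 := rfl
    have hb' : b ω = if fbar (X i0 ω) ≠ Y i0 ω then (1:ℝ) else 0 := rfl
    by_cases h1 : f (X i0 ω) = Y i0 ω <;> by_cases h2 : fbar (X i0 ω) = Y i0 ω
    · have hab : a ω - b ω = 0 := by rw [ha', hb']; simp [h1, h2]
      rw [hab]; norm_num
    · have hab : a ω - b ω = -1 := by rw [ha', hb']; simp [h1, h2]
      rw [hab]
      have he : Real.exp (t * m - t * (-1)) = Real.exp (t * m) * Real.exp t := by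
        rw [← Real.exp_add]; ring_nf
      rw [he, ← Real.cosh_add_sinh t]; ring
    · have hab : a ω - b ω = 1 := by rw [ha', hb']; simp [h1, h2]
      rw [hab]
      have he : Real.exp (t * m - t * 1) = Real.exp (t * m) * Real.exp (-t) := by
        rw [← Real.exp_add]; ring_nf
      rw [he, ← Real.cosh_sub_sinh t]; ring
    · have hab : a ω - b ω = 0 := by rw [ha', hb']; simp [h1, h2]
      rw [hab]; norm_num
  -- the single-sample mgf bound
  have hsingle : mgf (W i0) P 1 ≤ Real.exp (C * lam ^ 2 / (2 * n - lam) * m / n) := by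
    have heq : mgf (W i0) P 1 = Real.exp (t * m)
        * (1 - Real.sinh t * m + (Real.cosh t - 1) * s) := by
      calc mgf (W i0) P 1 = ∫ ω, Real.exp (1 * W i0 ω) ∂P := rfl
        _ = ∫ ω, Real.exp (t * m) * (1 - Real.sinh t * (a ω - b ω)
              + (Real.cosh t - 1) * (a ω - b ω) ^ 2) ∂P :=
          integral_congr_ae (Filter.Eventually.of_forall fun ω => hpt ω)
        _ = Real.exp (t * m) * ∫ ω, (1 - Real.sinh t * (a ω - b ω)
              + (Real.cosh t - 1) * (a ω - b ω) ^ 2) ∂P := integral_const_mul _ _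
        _ = Real.exp (t * m) * (1 - Real.sinh t * m + (Real.cosh t - 1) * s) := by
          have intf : Integrable (fun ω => 1 - Real.sinh t * (a ω - b ω)) P :=
            (integrable_const 1).sub (hZint.const_mul _)
          have intg : Integrable (fun ω => (Real.cosh t - 1) * (a ω - b ω) ^ 2) P :=
            intZ2.const_mul _
          have e1 : ∫ ω, (1 - Real.sinh t * (a ω - b ω)
                + (Real.cosh t - 1) * (a ω - b ω) ^ 2) ∂P
              = (∫ ω, (1 - Real.sinh t * (a ω - b ω)) ∂P)
                + ∫ ω, (Real.cosh t - 1) * (a ω - b ω) ^ 2 ∂P :=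
            integral_add intf intg
          have e2 : ∫ ω, (1 - Real.sinh t * (a ω - b ω)) ∂P
              = (∫ ω, (1:ℝ) ∂P) - ∫ ω, Real.sinh t * (a ω - b ω) ∂P :=
            integral_sub (integrable_const 1) (hZint.const_mul _)
          have e3 : ∫ ω, Real.sinh t * (a ω - b ω) ∂P = Real.sinh t * m := by
            rw [integral_const_mul, hZavg]
          have e4 : ∫ ω, (Real.cosh t - 1) * (a ω - b ω) ^ 2 ∂P
              = (Real.cosh t - 1) * s := by
            rw [integral_const_mul, ← hsdef]
          rw [e1, e2, e3, e4, integral_const]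
          simp
    rw [heq]
    have hexp1 : 1 - Real.sinh t * m + (Real.cosh t - 1) * s
        ≤ Real.exp (-(Real.sinh t * m) + (Real.cosh t - 1) * s) := by
      have := Real.add_one_le_exp (-(Real.sinh t * m) + (Real.cosh t - 1) * s)
      linarith
    calc Real.exp (t * m) * (1 - Real.sinh t * m + (Real.cosh t - 1) * s)
        ≤ Real.exp (t * m) * Real.exp (-(Real.sinh t * m) + (Real.cosh t - 1) * s) :=
          mul_le_mul_of_nonneg_left hexp1 (Real.exp_nonneg _)
      _ = Real.exp (t * m - Real.sinh t * m + (Real.cosh t - 1) * s) := by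
          rw [← Real.exp_add]; ring_nf
      _ ≤ Real.exp (C * lam ^ 2 / (2 * n - lam) * m / n) := by
          apply Real.exp_le_exp.mpr
          have h1 : t ≤ Real.sinh t := (Real.self_lt_sinh_iff.mpr ht0).le
          have h2 : Real.cosh t - 1 ≤ t ^ 2 / (2 - t) := cosh_sub_one_le' ht0 ht2
          have h3 : (Real.cosh t - 1) * s ≤ (t ^ 2 / (2 - t)) * (C * m) := by
            calc (Real.cosh t - 1) * s ≤ (Real.cosh t - 1) * (C * m) :=
                mul_le_mul_of_nonneg_left hsC (by linarith [Real.one_le_cosh t])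
              _ ≤ (t ^ 2 / (2 - t)) * (C * m) :=
                mul_le_mul_of_nonneg_right h2 (mul_nonneg hC.le hm0)
          have h4 : t * m - Real.sinh t * m ≤ 0 := by nlinarith
          have h5 : (t ^ 2 / (2 - t)) * (C * m) = C * lam ^ 2 / (2 * n - lam) * m / n := by
            rw [htdef]; field_simp
          calc t * m - Real.sinh t * m + (Real.cosh t - 1) * s
              ≤ 0 + t ^ 2 / (2 - t) * (C * m) := add_le_add h4 h3
            _ = C * lam ^ 2 / (2 * ↑n - lam) * m / ↑n := by rw [zero_add, h5]
  -- identical distribution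
  have hmgf_eq : ∀ i, mgf (W i) P 1 = mgf (W i0) P 1 := by
    intro i
    have hid : IdentDistrib (W i) (W i0) P P := (hident i).comp hφ
    have hid2 : IdentDistrib (fun ω => Real.exp (1 * W i ω))
        (fun ω => Real.exp (1 * W i0 ω)) P P :=
      hid.comp ((measurable_id.const_mul 1).exp)
    exact hid2.integral_eq
  -- put everything together
  calc ∫ ω, Real.exp (lam * m
        - lam * ((1 / (n:ℝ)) * ∑ i, (if f (X i ω) ≠ Y i ω then (1:ℝ) else 0)
          - (1 / (n:ℝ)) * ∑ i, (if fbar (X i ω) ≠ Y i ω then (1:ℝ) else 0))) ∂P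
      = mgf (∑ i, W i) P 1 :=
        integral_congr_ae (Filter.Eventually.of_forall fun ω => congrArg Real.exp (hrw ω))
    _ = ∏ i : Fin n, mgf (W i) P 1 := hWindep.mgf_sum hWmeas Finset.univ
    _ = (mgf (W i0) P 1) ^ n := by
        rw [Finset.prod_congr rfl (fun i _ => hmgf_eq i), Finset.prod_const,
          Finset.card_univ, Fintype.card_fin]
    _ ≤ (Real.exp (C * lam ^ 2 / (2 * n - lam) * m / n)) ^ n :=
        pow_le_pow_left₀ mgf_nonneg hsingle n
    _ = Real.exp (C * lam ^ 2 / (2 * n - lam) * m) := by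
        rw [← Real.exp_nat_mul]
        congr 1
        field_simp
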